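/- Let H = X⊗I₂⊗X + I₂⊗X⊗X, let |ψ⟩ = exp(−(iπ/4)·H)|011⟩, and let ρ = |ψ⟩⟨ψ| be the corresponding 8×8 projector. Then the reduced state of subsystem A, namely the 2×2 matrix Tr_{BC}ρ with entries (Tr_{BC}ρ)(a,a') = Σ_{b,c} ρ((a,b,c),(a',b,c)), equals (1/2)·I₂. (Hence this pure state is maximally entangled across the partition A:BC, witnessing that E_{A:BC} reaches its maximal value 1 at time τ = π/4.) -/

import Mathlib

/-!
STATEMENT 2: With `H = X⊗I₂⊗X + I₂⊗X⊗X`, `|ψ⟩ = exp(−(iπ/4)·H)|011⟩` and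
`ρ = |ψ⟩⟨ψ|`, the reduced state of subsystem A satisfies `Tr_{BC} ρ = (1/2)·I₂`.
-/

open Matrix
open scoped Kronecker

noncomputable section

/-- The Pauli-x matrix. -/
def X : Matrix (Fin 2) (Fin 2) ℂ := !![0, 1; 1, 0]

/-- The 2×2 identity matrix. -/
def Id2 : Matrix (Fin 2) (Fin 2) ℂ := 1

/-- `H = X⊗I₂⊗X + I₂⊗X⊗X` (tensor factors ordered A, B, C). -/
def HH : Matrix (Fin 2 × Fin 2 × Fin 2) (Fin 2 × Fin 2 × Fin 2) ℂ :=
  X ⊗ₖ (Id2 ⊗ₖ X) + Id2 ⊗ₖ (X ⊗ₖ X)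

/-- Standard basis vector `|0⟩` of ℂ². -/
def ket0 : Fin 2 → ℂ := ![1, 0]

/-- Standard basis vector `|1⟩` of ℂ². -/
def ket1 : Fin 2 → ℂ := ![0, 1]

/-- `|abc⟩ = |a⟩⊗|b⟩⊗|c⟩ ∈ ℂ⁸` (Kronecker product of vectors). -/
def kron3 (u v w : Fin 2 → ℂ) : Fin 2 × Fin 2 × Fin 2 → ℂ :=
  fun p => u p.1 * v p.2.1 * w p.2.2

/-- The outer product (projector) `|v⟩⟨v|`. -/
def outer {n : Type*} (v : n → ℂ) : Matrix n n ℂ := vecMulVec v (star v)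

/-- Partial trace over subsystems B and C:
`(Tr_{BC} ρ)(a, a') = Σ_{b,c} ρ((a,b,c), (a',b,c))`. -/
def trBC (ρ : Matrix (Fin 2 × Fin 2 × Fin 2) (Fin 2 × Fin 2 × Fin 2) ℂ) :
    Matrix (Fin 2) (Fin 2) ℂ :=
  Matrix.of fun a a' => ∑ b : Fin 2, ∑ c : Fin 2, ρ (a, b, c) (a', b, c)

/-! ### Auxiliary machinery -/

open NormedSpace in
/-- The exponential of a scalar multiple of an involution. -/
lemma exp_of_involution {A : Type*} [NormedRing A] [NormedAlgebra ℂ A] [CompleteSpace A]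
    (M : A) (h : M * M = 1) (z : ℂ) :
    exp (z • M) = Complex.cosh z • (1 : A) + Complex.sinh z • M := by
  rw [exp_eq_tsum ℂ]
  refine HasSum.tsum_eq ?_
  have hM2 : ∀ k : ℕ, M ^ (2 * k) = 1 := fun k => by rw [pow_mul, sq, h, one_pow]
  have hM2' : ∀ k : ℕ, M ^ (2 * k + 1) = M := fun k => by rw [pow_succ, hM2, one_mul]
  refine HasSum.even_add_odd ?_ ?_
  · have := (Complex.hasSum_cosh z).smul_const (1 : A)
    convert this using 2 with k
    rw [smul_pow, hM2, smul_smul, inv_mul_eq_div]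
  · have := (Complex.hasSum_sinh z).smul_const M
    convert this using 2 with k
    rw [smul_pow, hM2', smul_smul, inv_mul_eq_div]

/-- The first summand `X⊗I₂⊗X` of `HH`. -/
def AA : Matrix (Fin 2 × Fin 2 × Fin 2) (Fin 2 × Fin 2 × Fin 2) ℂ := X ⊗ₖ (Id2 ⊗ₖ X)

/-- The second summand `I₂⊗X⊗X` of `HH`. -/
def BB : Matrix (Fin 2 × Fin 2 × Fin 2) (Fin 2 × Fin 2 × Fin 2) ℂ := Id2 ⊗ₖ (X ⊗ₖ X)

lemma hXX : X * X = 1 := by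
  ext i j
  fin_cases i <;> fin_cases j <;> simp [X, Matrix.mul_apply, Fin.sum_univ_succ, Matrix.one_apply]

lemma hAA : AA * AA = 1 := by
  rw [AA, Id2, ← Matrix.mul_kronecker_mul, ← Matrix.mul_kronecker_mul, hXX, one_mul,
    Matrix.one_kronecker_one, Matrix.one_kronecker_one]

lemma hBB : BB * BB = 1 := by
  rw [BB, Id2, ← Matrix.mul_kronecker_mul, ← Matrix.mul_kronecker_mul, hXX, one_mul,
    Matrix.one_kronecker_one, Matrix.one_kronecker_one]

lemma hcomm : Commute AA BB := by
  unfold AA BB Id2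
  rw [Commute, SemiconjBy, ← Matrix.mul_kronecker_mul, ← Matrix.mul_kronecker_mul,
    ← Matrix.mul_kronecker_mul, ← Matrix.mul_kronecker_mul, one_mul, mul_one]

/-- `cos(π/4)` as a complex number. -/
def cc : ℂ := ((Real.sqrt 2 / 2 : ℝ) : ℂ)

/-- `-i·sin(π/4)` as a complex number. -/
def ss : ℂ := -cc * Complex.I

lemma exp_tHH :
    NormedSpace.exp ((-(Complex.I * ((Real.pi : ℂ) / 4))) • HH)
      = (cc • 1 + ss • AA) * (cc • 1 + ss • BB) := by
  letI : SeminormedRing (Matrix (Fin 2 × Fin 2 × Fin 2) (Fin 2 × Fin 2 × Fin 2) ℂ) :=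
    Matrix.linftyOpSemiNormedRing
  letI : NormedRing (Matrix (Fin 2 × Fin 2 × Fin 2) (Fin 2 × Fin 2 × Fin 2) ℂ) :=
    Matrix.linftyOpNormedRing
  letI : NormedAlgebra ℂ (Matrix (Fin 2 × Fin 2 × Fin 2) (Fin 2 × Fin 2 × Fin 2) ℂ) :=
    Matrix.linftyOpNormedAlgebra
  have ht : (-(Complex.I * ((Real.pi : ℂ) / 4))) = ((-(Real.pi / 4) : ℝ) : ℂ) * Complex.I := by
    push_cast; ring
  have hc : Complex.cosh (-(Complex.I * ((Real.pi : ℂ) / 4))) = cc := by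
    rw [ht, Complex.cosh_mul_I, ← Complex.ofReal_cos, Real.cos_neg, Real.cos_pi_div_four, cc]
  have hs : Complex.sinh (-(Complex.I * ((Real.pi : ℂ) / 4))) = ss := by
    rw [ht, Complex.sinh_mul_I, ← Complex.ofReal_sin, Real.sin_neg, Real.sin_pi_div_four, ss, cc]
    push_cast; ring
  have h1 : HH = AA + BB := rfl
  have hadd := NormedSpace.exp_add_of_commute_of_mem_ball (𝕂 := ℂ)
    (x := (-(Complex.I * ((Real.pi : ℂ) / 4))) • AA) (y := (-(Complex.I * ((Real.pi : ℂ) / 4))) • BB)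
    ((hcomm.smul_left _).smul_right _)
    (by rw [NormedSpace.expSeries_radius_eq_top]; exact edist_lt_top _ _)
    (by rw [NormedSpace.expSeries_radius_eq_top]; exact edist_lt_top _ _)
  rw [h1, smul_add]
  erw [hadd, exp_of_involution AA hAA, exp_of_involution BB hBB, hc, hs]

/-- The explicit state vector `|ψ⟩ = (1/2)(|011⟩ − i|000⟩ − i|110⟩ − |101⟩)`. -/
def psiv : Fin 2 × Fin 2 × Fin 2 → ℂ :=
  fun p => ![![![-Complex.I/2, 0], ![0, 1/2]], ![![0, -(1/2 : ℂ)], ![-Complex.I/2, 0]]]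
    p.1 p.2.1 p.2.2

set_option maxHeartbeats 1000000 in
lemma hpsi : ((cc • 1 + ss • AA) * (cc • 1 + ss • BB)).mulVec (kron3 ket0 ket1 ket1) = psiv := by
  have hr22 : ((Real.sqrt 2 : ℝ) : ℂ) ^ 2 = 2 := by
    norm_cast
    exact Real.sq_sqrt (by norm_num)
  funext p
  obtain ⟨a, b, c⟩ := p
  fin_cases a <;> fin_cases b <;> fin_cases c <;>
    simp [Matrix.mulVec, dotProduct, Matrix.mul_apply, Fintype.sum_prod_type,
      Fin.sum_univ_succ, Matrix.add_apply, Matrix.smul_apply, Matrix.one_apply,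
      AA, BB, Matrix.kroneckerMap_apply, X, Id2, kron3, ket0, ket1, cc, ss, psiv,
      Prod.ext_iff, Complex.I_sq] <;>
  (try (ring_nf; simp only [hr22, Complex.I_sq]; try norm_num; try ring_nf))

theorem reduced_state_of_A_is_maximally_mixed :
    trBC (outer
        ((NormedSpace.exp ((-(Complex.I * ((Real.pi : ℂ) / 4))) • HH)).mulVec
          (kron3 ket0 ket1 ket1))) = (1 / 2 : ℂ) • Id2 := by
  rw [exp_tHH, hpsi]
  ext a a'
  fin_cases a <;> fin_cases a' <;>
    simp [trBC, outer, vecMulVec, psiv, Fin.sum_univ_succ, Id2, Matrix.one_apply,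
      map_div₀, map_ofNat, Complex.conj_I, Complex.ext_iff] <;> norm_num

end
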